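/- Roos bound for constacyclic codes: Let N and M be nonempty subsets of Ω, and let d_N be a positive integer such that every nonzero codeword of D_N has Hamming weight at least d_N. Define MN = { εη/α : ε ∈ M, η ∈ N } (a subset of Ω). If there exists a consecutive subset M′ of Ω with M ⊆ M′ and |M′| ≤ |M| + d_N − 2, then every nonzero codeword of D_{MN} has Hamming weight at least |M| + d_N − 1. -/

import Mathlib

open Polynomial

open scoped Classical in
/-- Hamming weight: the number of nonzero coordinates. -/
noncomputable def wt {ι K : Type*} [Fintype ι] [Zero K] (c : ι → K) : ℕ :=
  (Finset.univ.filter fun i => c i ≠ 0).card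

/-- The λ-constacyclic code of length `m` over `F` with zero set `P`. -/
def Dcode {F : Type*} [Field F] (m : ℕ) (P : Set F) : Set (Fin m → F) :=
  {c | ∀ β ∈ P, ∑ k : Fin m, c k * β ^ (k : ℕ) = 0}

/-- A consecutive subset of Ω: `{αξ^(e+zn) : 0 ≤ z ≤ δ-2}` with `gcd(m,n) = 1`. -/
def IsConsecutive {F : Type*} [Field F] (m : ℕ) (α ξ : F) (E : Set F) : Prop :=
  ∃ e δ n : ℕ, 2 ≤ δ ∧ 0 < n ∧ Nat.Coprime m n ∧
    E = {x | ∃ z < δ - 1, x = α * ξ ^ (e + z * n)}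

lemma wt_eq_card {ι K : Type*} [Fintype ι] [Zero K] (c : ι → K)
    [DecidablePred fun i => c i ≠ 0] :
    wt c = (Finset.univ.filter fun i => c i ≠ 0).card := by
  unfold wt; congr!

theorem roos_bound
    {Fq F : Type*} [Field Fq] [Fintype Fq] [Field F] [Algebra Fq F]
    (m : ℕ) (hm : 0 < m) (hcop : Nat.Coprime m (Fintype.card Fq))
    (lam : Fq) (hlam : lam ≠ 0)
    (r : ℕ) (hr : orderOf lam = r)
    (hsplit : IsSplittingField Fq F (X ^ m - C lam))
    (α : F) (hα : IsPrimitiveRoot α (r * m))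
    (hαm : α ^ m = algebraMap Fq F lam)
    (Ω : Set F) (hΩ : Ω = {x : F | ∃ k < m, x = α * (α ^ r) ^ k})
    (M N : Set F) (hM : M.Nonempty) (hN : N.Nonempty)
    (hMΩ : M ⊆ Ω) (hNΩ : N ⊆ Ω)
    (dN : ℕ) (hdN : 0 < dN)
    (hDN : ∀ c ∈ Dcode m N, c ≠ 0 → dN ≤ wt c)
    (MN : Set F) (hMN : MN = {x : F | ∃ ε ∈ M, ∃ η ∈ N, x = ε * η / α})
    (M' : Set F) (hM'cons : IsConsecutive m α (α ^ r) M')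
    (hMM' : M ⊆ M') (hcard : M'.ncard ≤ M.ncard + dN - 2) :
    ∀ c ∈ Dcode m MN, c ≠ 0 → M.ncard + dN - 1 ≤ wt c := by
  classical
  obtain ⟨e, δ, n, hδ, hn, hmn, hM'⟩ := hM'cons
  set ξ : F := α ^ r with hξ
  -- r is positive
  have hrpos : 0 < r := by
    rw [← hr]
    refine orderOf_pos_iff.mpr (isOfFinOrder_iff_pow_eq_one.mpr ?_)
    refine ⟨Fintype.card Fq - 1, ?_, FiniteField.pow_card_sub_one_eq_one lam hlam⟩
    have := Fintype.one_lt_card (α := Fq)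
    omega
  have hrm : 0 < r * m := Nat.mul_pos hrpos hm
  have hα0 : α ≠ 0 := hα.ne_zero hrm.ne'
  have hξprim : IsPrimitiveRoot ξ m := hα.pow hrm rfl
  have hξ0 : ξ ≠ 0 := pow_ne_zero _ hα0
  have hβprim : IsPrimitiveRoot (ξ ^ n) m := hξprim.pow_of_coprime n hmn.symm
  -- finiteness facts
  have hM'sub : M' ⊆ (fun z : ℕ => α * ξ ^ (e + z * n)) '' Set.Iio (δ - 1) := by
    rw [hM']; rintro x ⟨z, hz, rfl⟩; exact ⟨z, hz, rfl⟩
  have hM'fin : M'.Finite := ((Set.finite_Iio _).image _).subset hM'sub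
  have hMfin : M.Finite := hM'fin.subset hMM'
  have haM : 1 ≤ M.ncard := (Set.ncard_pos hMfin).mpr hM
  have hab : M.ncard ≤ M'.ncard := Set.ncard_le_ncard hMM' hM'fin
  have hbδ : M'.ncard ≤ δ - 1 := by
    calc M'.ncard ≤ ((fun z : ℕ => α * ξ ^ (e + z * n)) '' Set.Iio (δ - 1)).ncard :=
          Set.ncard_le_ncard hM'sub ((Set.finite_Iio _).image _)
      _ ≤ (Set.Iio (δ - 1)).ncard := Set.ncard_image_le (Set.finite_Iio _)
      _ = δ - 1 := by rw [← Finset.coe_Iio, Set.ncard_coe_finset, Nat.card_Iio]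
  intro c hc hc0
  set S : Finset (Fin m) := Finset.univ.filter (fun k => c k ≠ 0) with hS
  have hwt : wt c = S.card := wt_eq_card c
  set w : ℕ := S.card with hw
  -- the vectors u ε
  set u : F → (Fin m → F) := fun ε k => if k ∈ S then (ε / α) ^ (k : ℕ) else 0 with hu
  set W : Submodule F (Fin m → F) := Submodule.span F (u '' M) with hW
  set W' : Submodule F (Fin m → F) := Submodule.span F (u '' M') with hW'
  have hWW' : W ≤ W' := Submodule.span_mono (Set.image_mono hMM')
  -- elements of W' are supported on S
  have hsupp : ∀ v ∈ W', ∀ k, k ∉ S → v k = 0 := by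
    intro v hv
    induction hv using Submodule.span_induction with
    | mem x hx =>
      obtain ⟨ε, -, rfl⟩ := hx
      intro k hk
      simp [hu, hk]
    | zero => intro k hk; rfl
    | add x y hx hy ihx ihy => intro k hk; simp [ihx k hk, ihy k hk]
    | smul a x hx ihx => intro k hk; simp [ihx k hk]
  -- every nonzero element of W has weight at least dN
  have hminwt : ∀ v ∈ W, v ≠ 0 → dN ≤ wt v := by
    intro v hvW hv0
    have hv := hvW
    rw [hW, Finsupp.mem_span_image_iff_linearCombination] at hv
    obtain ⟨l, hlsupp, hl⟩ := hv
    rw [Finsupp.mem_supported] at hlsupp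
    have hveq : ∀ k, v k = ∑ ε ∈ l.support, l ε * u ε k := by
      intro k
      rw [← hl]
      simp [Finsupp.linearCombination_apply, Finsupp.sum]
    set cv : Fin m → F := fun k => c k * v k with hcv
    have hcvD : cv ∈ Dcode m N := by
      intro η hη
      have hterm : ∀ k : Fin m, cv k * η ^ (k : ℕ)
          = ∑ ε ∈ l.support, l ε * (c k * ((ε * η / α) ^ (k : ℕ))) := by
        intro k
        show c k * v k * η ^ (k : ℕ) = _
        rw [hveq k, Finset.mul_sum, Finset.sum_mul]
        refine Finset.sum_congr rfl fun ε _ => ?_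
        by_cases hk : k ∈ S
        · have huk : u ε k = (ε / α) ^ (k : ℕ) := by simp [hu, hk]
          rw [huk, mul_div_right_comm ε η α, mul_pow]
          ring
        · have hck : c k = 0 := by
            by_contra h
            exact hk (by simp [hS, h])
          simp [hck]
      calc ∑ k : Fin m, cv k * η ^ (k : ℕ)
          = ∑ k : Fin m, ∑ ε ∈ l.support, l ε * (c k * ((ε * η / α) ^ (k : ℕ))) :=
            Finset.sum_congr rfl fun k _ => hterm k
        _ = ∑ ε ∈ l.support, l ε * ∑ k : Fin m, c k * ((ε * η / α) ^ (k : ℕ)) := by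
            rw [Finset.sum_comm]
            exact Finset.sum_congr rfl fun ε _ => by rw [Finset.mul_sum]
        _ = 0 := by
            refine Finset.sum_eq_zero fun ε hε => ?_
            have hεMN : ε * η / α ∈ MN := by
              rw [hMN]; exact ⟨ε, hlsupp hε, η, hη, rfl⟩
            rw [hc _ hεMN, mul_zero]
    have hcv0 : cv ≠ 0 := by
      obtain ⟨k, hk⟩ : ∃ k, v k ≠ 0 := by
        by_contra h; push_neg at h; exact hv0 (funext h)
      have hkS : k ∈ S := by
        by_contra hkS
        exact hk (hsupp v (hWW' hvW) k hkS)
      have hck : c k ≠ 0 := by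
        simp only [hS, Finset.mem_filter, Finset.mem_univ, true_and] at hkS
        exact hkS
      intro h
      have : cv k = 0 := by rw [h]; rfl
      rw [hcv] at this
      exact (mul_ne_zero hck hk) this
    refine (hDN cv hcvD hcv0).trans ?_
    rw [wt_eq_card cv, wt_eq_card v]
    apply Finset.card_le_card
    intro k hk
    simp only [Finset.mem_filter, Finset.mem_univ, true_and] at hk ⊢
    intro h
    exact hk (show c k * v k = 0 by rw [h, mul_zero])
  -- dN ≤ w
  obtain ⟨ε₀, hε₀⟩ := hM
  have hε₀0 : ε₀ ≠ 0 := by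
    have hε₀Ω := hMΩ hε₀
    rw [hΩ] at hε₀Ω
    obtain ⟨k, -, rfl⟩ := hε₀Ω
    exact mul_ne_zero hα0 (pow_ne_zero _ hξ0)
  have hSne : S.Nonempty := by
    obtain ⟨k, hk⟩ : ∃ k, c k ≠ 0 := by
      by_contra h; push_neg at h; exact hc0 (funext h)
    exact ⟨k, by simp [hS, hk]⟩
  have hu0 : u ε₀ ≠ 0 := by
    obtain ⟨k, hkS⟩ := hSne
    intro h
    have h2 := congrFun h k
    simp only [hu, if_pos hkS, Pi.zero_apply] at h2
    exact (pow_ne_zero _ (div_ne_zero hε₀0 hα0)) h2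
  have huW : u ε₀ ∈ W := Submodule.subset_span ⟨ε₀, hε₀, rfl⟩
  have hdNw : dN ≤ w := by
    refine (hminwt _ huW hu0).trans ?_
    rw [wt_eq_card]
    apply Finset.card_le_card
    intro k hk
    simp only [Finset.mem_filter, Finset.mem_univ, true_and] at hk
    by_contra hkS
    exact hk (by simp [hu, hkS])
  -- Singleton bound: finrank W ≤ w - (dN - 1)
  obtain ⟨T, hTS, hT⟩ := Finset.exists_subset_card_eq
    (show dN - 1 ≤ S.card from le_trans (Nat.sub_le dN 1) hdNw)
  set R : Finset (Fin m) := S \ T with hRdef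
  have hinj : Function.Injective
      ((LinearMap.funLeft F F (fun i : {x // x ∈ R} => (i : Fin m))).comp W.subtype) := by
    rw [← LinearMap.ker_eq_bot, LinearMap.ker_eq_bot']
    rintro ⟨v, hvW⟩ hv
    have hzero : ∀ i ∈ R, v i = 0 := fun i hi => congrFun hv ⟨i, hi⟩
    have hvz : v = 0 := by
      by_contra hv0
      have h1 : dN ≤ wt v := hminwt v hvW hv0
      have h2 : wt v ≤ T.card := by
        rw [wt_eq_card]
        apply Finset.card_le_card
        intro k hk
        simp only [Finset.mem_filter, Finset.mem_univ, true_and] at hk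
        have hkS : k ∈ S := by
          by_contra h; exact hk (hsupp v (hWW' hvW) k h)
        by_contra hkT
        exact hk (hzero k (Finset.mem_sdiff.mpr ⟨hkS, hkT⟩))
      omega
    exact Subtype.ext hvz
  have hsing : Module.finrank F W ≤ w - (dN - 1) := by
    have h1 := LinearMap.finrank_le_finrank_of_injective hinj
    rwa [Module.finrank_fintype_fun_eq_card, Fintype.card_coe, hRdef,
      Finset.card_sdiff_of_subset hTS, hT] at h1
  -- Vandermonde: min (δ-1) w ≤ finrank W'
  set t : ℕ := min (δ - 1) w with ht
  obtain ⟨S₀, hS₀S, hS₀⟩ := Finset.exists_subset_card_eq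
    (show t ≤ S.card from min_le_right _ _)
  set g : Fin t → (Fin m → F) := fun z => u (α * ξ ^ (e + (z : ℕ) * n)) with hg
  have hgW' : ∀ z, g z ∈ W' := by
    intro z
    refine Submodule.subset_span ⟨α * ξ ^ (e + (z : ℕ) * n), ?_, rfl⟩
    rw [hM']
    exact ⟨z, lt_of_lt_of_le z.2 (min_le_left _ _), rfl⟩
  have hli : LinearIndependent F g := by
    rw [Fintype.linearIndependent_iff]
    intro a ha z
    set p : F[X] := ∑ z : Fin t, C (a z) * X ^ (z : ℕ) with hp
    have hdeg : p.natDegree < t := by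
      refine lt_of_le_of_lt (Polynomial.natDegree_sum_le_of_forall_le _ _
        (fun i _ => le_trans (Polynomial.natDegree_C_mul_X_pow_le _ _)
          (Nat.le_of_lt_succ (by omega : (i : ℕ) < (t - 1) + 1)))) ?_
      have := z.pos
      omega
    set B : Finset F := S₀.image (fun i : Fin m => (ξ ^ n) ^ (i : ℕ)) with hB
    have hcardB : B.card = t := by
      rw [hB, Finset.card_image_of_injOn, hS₀]
      intro i _ j _ hij
      exact Fin.ext (hβprim.pow_inj i.isLt j.isLt hij)
    have hevalB : ∀ b ∈ B, p.eval b = 0 := by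
      intro b hb
      obtain ⟨i, hiS₀, rfl⟩ := Finset.mem_image.mp hb
      have hai : ∑ z : Fin t, a z * (ξ ^ (e + (z : ℕ) * n)) ^ (i : ℕ) = 0 := by
        have h0 := congrFun ha i
        rw [Finset.sum_apply] at h0
        simpa [hg, hu, if_pos (hS₀S hiS₀), mul_div_assoc,
          mul_div_cancel_left₀ _ hα0] using h0
      have hsplit2 : ∀ z : Fin t, (ξ ^ (e + (z : ℕ) * n)) ^ (i : ℕ)
          = ξ ^ (e * (i : ℕ)) * ((ξ ^ n) ^ (i : ℕ)) ^ (z : ℕ) := by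
        intro z
        rw [← pow_mul ξ (e + (z : ℕ) * n) (i : ℕ), ← pow_mul ξ n (i : ℕ),
          ← pow_mul ξ (n * (i : ℕ)) (z : ℕ), ← pow_add ξ (e * (i : ℕ)) (n * (i : ℕ) * (z : ℕ))]
        congr 1
        ring
      have hfac : ξ ^ (e * (i : ℕ)) * ∑ z : Fin t, a z * ((ξ ^ n) ^ (i : ℕ)) ^ (z : ℕ) = 0 := by
        rw [Finset.mul_sum, ← hai]
        refine Finset.sum_congr rfl fun z _ => ?_
        rw [hsplit2 z]; ring
      have hsum0 : ∑ z : Fin t, a z * ((ξ ^ n) ^ (i : ℕ)) ^ (z : ℕ) = 0 :=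
        (mul_eq_zero.mp hfac).resolve_left (pow_ne_zero _ hξ0)
      rw [hp]
      simp only [Polynomial.eval_finset_sum, Polynomial.eval_mul, Polynomial.eval_C,
        Polynomial.eval_pow, Polynomial.eval_X]
      exact hsum0
    have hp0 : p = 0 :=
      Polynomial.eq_zero_of_natDegree_lt_card_of_eval_eq_zero' p B hevalB
        (by rw [hcardB]; exact hdeg)
    have hcoeff : p.coeff (z : ℕ) = a z := by
      rw [hp, Polynomial.finset_sum_coeff]
      rw [Finset.sum_eq_single z]
      · simp
      · intro b _ hbz
        simp only [Polynomial.coeff_C_mul, Polynomial.coeff_X_pow,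
          if_neg (fun h => hbz (Fin.ext h).symm), mul_zero]
      · intro h; exact absurd (Finset.mem_univ z) h
    rw [← hcoeff, hp0, Polynomial.coeff_zero]
  have hE : t ≤ Module.finrank F W' := by
    have h1 : Submodule.span F (Set.range g) ≤ W' := by
      rw [Submodule.span_le, Set.range_subset_iff]
      exact fun z => hgW' z
    calc t = Fintype.card (Fin t) := (Fintype.card_fin t).symm
      _ = Module.finrank F (Submodule.span F (Set.range g)) := (finrank_span_eq_card hli).symm
      _ ≤ Module.finrank F W' := Submodule.finrank_mono h1
  -- finrank W' ≤ finrank W + (|M'| - |M|)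
  have hDfin : (M' \ M).Finite := hM'fin.diff
  have hF : Module.finrank F W' ≤ Module.finrank F W + (M'.ncard - M.ncard) := by
    have h1 : W' = W ⊔ Submodule.span F (u '' (M' \ M)) := by
      rw [hW', hW, ← Submodule.span_union, ← Set.image_union, Set.union_diff_cancel hMM']
    have hfin : (u '' (M' \ M)).Finite := hDfin.image u
    have h2 : Module.finrank F (Submodule.span F (u '' (M' \ M))) ≤ M'.ncard - M.ncard := by
      calc Module.finrank F (Submodule.span F (u '' (M' \ M)))
          = Module.finrank F (Submodule.span F (↑hfin.toFinset : Set (Fin m → F))) := by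
            rw [hfin.coe_toFinset]
        _ ≤ hfin.toFinset.card := finrank_span_finset_le_card _
        _ = (u '' (M' \ M)).ncard := by rw [Set.ncard_eq_toFinset_card _ hfin]
        _ ≤ (M' \ M).ncard := Set.ncard_image_le hDfin
        _ = M'.ncard - M.ncard := Set.ncard_diff hMM' hMfin
    rw [h1]
    exact le_trans (Submodule.finrank_add_le_finrank_add_finrank _ _) (by omega)
  rw [hwt]
  omega
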